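/- Let (M,d) be a compact metric space and let E be a compact subset of M^ℤ for the metric d_1. Then the set of maps φ : E → ℝ^k that are both continuous for d_1 and Lipschitz for d_∞ is dense, for the uniform norm, in the space of all d_1-continuous maps E → ℝ^k. -/

import Mathlib

open Filter

/-- The metric `d₁` on `M^ℤ`: `d₁(x,y) = Σ_{n ∈ ℤ} d(x_n, y_n) / 2^{|n|}`. -/
noncomputable def d1 {M : Type*} [PseudoMetricSpace M] (x y : ℤ → M) : ℝ :=
  ∑' n : ℤ, dist (x n) (y n) / 2 ^ n.natAbs

/-- The metric `d_∞` on `M^ℤ`: `d_∞(x,y) = sup_{n ∈ ℤ} d(x_n, y_n)`. -/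
noncomputable def dInfty {M : Type*} [PseudoMetricSpace M] (x y : ℤ → M) : ℝ :=
  ⨆ n : ℤ, dist (x n) (y n)

/-- `E ⊆ M^ℤ` is compact for the metric `d₁` (expressed through sequential compactness,
which is equivalent to compactness in metric spaces). -/
def IsD1Compact {M : Type*} [PseudoMetricSpace M] (E : Set (ℤ → M)) : Prop :=
  ∀ u : ℕ → (ℤ → M), (∀ n, u n ∈ E) → ∃ x ∈ E, ∃ σ : ℕ → ℕ, StrictMono σ ∧
    Tendsto (fun n => d1 x (u (σ n))) atTop (nhds 0)

section
variable {M : Type*} [PseudoMetricSpace M] {D : ℝ} (hD : ∀ a b : M, dist a b ≤ D)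

lemma g_summable (D : ℝ) : Summable (fun n : ℤ => D / 2 ^ n.natAbs) := by
  apply Summable.of_nat_of_neg <;>
  · simp only [Int.natAbs_natCast, Int.natAbs_neg]
    simpa [div_eq_mul_inv, ← inv_pow] using
      (summable_geometric_of_lt_one (by norm_num : (0:ℝ) ≤ 2⁻¹) (by norm_num)).mul_left D

include hD in
lemma d1_summable (x y : ℤ → M) :
    Summable (fun n : ℤ => dist (x n) (y n) / 2 ^ n.natAbs) := by
  apply Summable.of_nonneg_of_le (fun n => by positivity)
    (fun n => div_le_div_of_nonneg_right ?_ ?_) (g_summable D)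
  · exact hD _ _
  · positivity

lemma d1_nonneg (x y : ℤ → M) : 0 ≤ d1 x y :=
  tsum_nonneg fun n => by positivity

lemma d1_symm (x y : ℤ → M) : d1 x y = d1 y x := by
  unfold d1; exact tsum_congr fun n => by rw [dist_comm]

include hD in
lemma term_le_d1 (x y : ℤ → M) (n : ℤ) :
    dist (x n) (y n) / 2 ^ n.natAbs ≤ d1 x y :=
  Summable.le_tsum (d1_summable hD x y) n fun m _ => by positivity

include hD in
lemma d1_triangle (x y z : ℤ → M) : d1 x z ≤ d1 x y + d1 y z := by
  unfold d1
  rw [← Summable.tsum_add (d1_summable hD x y) (d1_summable hD y z)]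
  refine Summable.tsum_le_tsum (fun n => ?_) (d1_summable hD x z)
    ((d1_summable hD x y).add (d1_summable hD y z))
  rw [← add_div]
  exact div_le_div_of_nonneg_right (dist_triangle _ _ _) (by positivity)

end

lemma coord_abs_le_norm {k : ℕ} (v : EuclideanSpace ℝ (Fin k)) (i : Fin k) :
    |v i| ≤ ‖v‖ := by
  rw [EuclideanSpace.norm_eq, ← Real.sqrt_sq_eq_abs]
  apply Real.sqrt_le_sqrt
  calc v i ^ 2 = ‖v i‖ ^ 2 := by rw [Real.norm_eq_abs, sq_abs]
    _ ≤ ∑ j, ‖v j‖ ^ 2 :=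
        Finset.single_le_sum (f := fun j => ‖v j‖ ^ 2) (fun j _ => sq_nonneg _) (Finset.mem_univ i)

lemma norm_le_of_coords {k : ℕ} (v : EuclideanSpace ℝ (Fin k)) {c : ℝ} (hc : 0 ≤ c)
    (h : ∀ i, |v i| ≤ c) : ‖v‖ ≤ k * c := by
  rw [EuclideanSpace.norm_eq]
  have h1 : ∑ j, ‖v j‖ ^ 2 ≤ ((k : ℝ) * c) ^ 2 := by
    have h2 : ∑ j, ‖v j‖ ^ 2 ≤ ∑ _j : Fin k, c ^ 2 := by
      refine Finset.sum_le_sum fun j _ => ?_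
      rw [Real.norm_eq_abs]
      exact pow_le_pow_left₀ (abs_nonneg _) (h j) 2
    rw [Finset.sum_const, Finset.card_univ, Fintype.card_fin, nsmul_eq_mul] at h2
    refine h2.trans ?_
    rcases Nat.eq_zero_or_pos k with hk | hk
    · simp [hk]
    · have : (1 : ℝ) ≤ k := by exact_mod_cast hk
      nlinarith
  calc √(∑ j, ‖v j‖ ^ 2) ≤ √(((k:ℝ)*c)^2) := Real.sqrt_le_sqrt h1
    _ = (k:ℝ)*c := Real.sqrt_sq (by positivity)



/-- Let `(M,d)` be a compact metric space and `E ⊆ M^ℤ` compact for `d₁`.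
The maps `E → ℝ^k` that are both `d₁`-continuous and `d_∞`-Lipschitz are dense, for the
uniform norm, among all `d₁`-continuous maps `E → ℝ^k`. -/
theorem dense_d1_continuous_dInfty_lipschitz
    {M : Type*} [MetricSpace M] [CompactSpace M] (E : Set (ℤ → M)) (hE : IsD1Compact E)
    (k : ℕ) (φ : (ℤ → M) → EuclideanSpace ℝ (Fin k))
    (hφ : ∀ x ∈ E, ∀ ε : ℝ, 0 < ε → ∃ δ : ℝ, 0 < δ ∧
      ∀ y ∈ E, d1 x y < δ → ‖φ y - φ x‖ < ε)
    (ε : ℝ) (hε : 0 < ε) :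
    ∃ ψ : (ℤ → M) → EuclideanSpace ℝ (Fin k),
      (∀ x ∈ E, ∀ ε' : ℝ, 0 < ε' → ∃ δ : ℝ, 0 < δ ∧
        ∀ y ∈ E, d1 x y < δ → ‖ψ y - ψ x‖ < ε') ∧
      (∃ Λ : ℝ, ∀ x ∈ E, ∀ y ∈ E, ‖ψ x - ψ y‖ ≤ Λ * dInfty x y) ∧
      (∀ x ∈ E, ‖ψ x - φ x‖ ≤ ε) := by
  classical
  rcases E.eq_empty_or_nonempty with hEe | ⟨z₀, hz₀⟩
  · subst hEe
    exact ⟨φ, by simp, ⟨0, by simp⟩, by simp⟩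
  haveI : Nonempty E := ⟨⟨z₀, hz₀⟩⟩
  -- a uniform bound on distances in M
  obtain ⟨D, hD⟩ : ∃ D, ∀ a b : M, dist a b ≤ D := by
    obtain ⟨C, hC⟩ := Metric.isBounded_iff.1 (isCompact_univ (X := M)).isBounded
    exact ⟨C, fun a b => hC (Set.mem_univ a) (Set.mem_univ b)⟩
  have hD0 : 0 ≤ D := le_trans dist_nonneg (hD (z₀ 0) (z₀ 0))
  -- uniform continuity of φ on E
  have hUC : ∀ ε' : ℝ, 0 < ε' → ∃ δ : ℝ, 0 < δ ∧
      ∀ x ∈ E, ∀ y ∈ E, d1 x y < δ → ‖φ y - φ x‖ < ε' := by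
    intro ε' hε'
    by_contra hcon
    push_neg at hcon
    choose x hx y hy hdlt hnge using fun n : ℕ => hcon (1/(n+1)) (by positivity)
    obtain ⟨a, haE, σ, hσ, hconv⟩ := hE x hx
    obtain ⟨δ, hδ, hδφ⟩ := hφ a haE (ε'/2) (by positivity)
    obtain ⟨n, hn1, hn2⟩ : ∃ n : ℕ, d1 a (x (σ n)) < δ/2 ∧ (1:ℝ)/(n+1) < δ/2 := by
      have h1 := (tendsto_order.1 hconv).2 (δ/2) (by positivity)
      have h3 := (tendsto_order.1 tendsto_one_div_add_atTop_nhds_zero_nat).2 (δ/2) (by positivity)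
      exact (h1.and h3).exists
    have hle : (1:ℝ)/(σ n + 1) ≤ 1/(n+1) := by
      apply one_div_le_one_div_of_le (by positivity)
      have : (n:ℝ) ≤ σ n := by exact_mod_cast hσ.le_apply
      linarith
    have hdy : d1 a (y (σ n)) < δ := by
      have := d1_triangle hD a (x (σ n)) (y (σ n))
      have h5 := hdlt (σ n)
      linarith
    have hdx : d1 a (x (σ n)) < δ := by linarith
    have h6 := hδφ _ (hy (σ n)) hdy
    have h7 := hδφ _ (hx (σ n)) hdx
    have h8 := hnge (σ n)
    have h9 := dist_triangle (φ (y (σ n))) (φ a) (φ (x (σ n)))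
    rw [dist_eq_norm, dist_eq_norm, dist_eq_norm] at h9
    rw [norm_sub_rev (φ a)] at h9
    linarith
  -- boundedness of φ on E
  obtain ⟨C, hC0, hCb⟩ : ∃ C : ℝ, 0 ≤ C ∧ ∀ x ∈ E, ‖φ x‖ ≤ C := by
    by_contra hcon
    push_neg at hcon
    have hcon' : ∀ n : ℕ, ∃ x ∈ E, (n : ℝ) < ‖φ x‖ := by
      intro n
      obtain ⟨x, hx1, hx2⟩ := hcon ((n:ℝ) ⊔ ‖φ z₀‖) (le_trans (norm_nonneg _) le_sup_right)
      exact ⟨x, hx1, lt_of_le_of_lt le_sup_left hx2⟩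
    choose u hu hC using hcon'
    obtain ⟨a, haE, σ, hσ, hconv⟩ := hE u hu
    obtain ⟨δ, hδ, hδφ⟩ := hφ a haE 1 one_pos
    obtain ⟨n, hn1, hn2⟩ : ∃ n : ℕ, d1 a (u (σ n)) < δ ∧ ‖φ a‖ + 1 < n := by
      have h1 := (tendsto_order.1 hconv).2 δ hδ
      have h2 := tendsto_natCast_atTop_atTop (R := ℝ) |>.eventually_gt_atTop (‖φ a‖ + 1)
      exact (h1.and h2).exists
    have h3 := hδφ _ (hu (σ n)) hn1
    have h4 : ‖φ (u (σ n))‖ ≤ ‖φ (u (σ n)) - φ a‖ + ‖φ a‖ := by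
      have := norm_add_le (φ (u (σ n)) - φ a) (φ a)
      simpa using this
    have h5 := hC (σ n)
    have h6 : (n:ℝ) ≤ σ n := by exact_mod_cast hσ.le_apply
    linarith
  -- parameters
  obtain ⟨ε₀, hε₀, hkε₀⟩ : ∃ e : ℝ, 0 < e ∧ (k:ℝ) * e ≤ ε := by
    refine ⟨ε/(k+1), by positivity, ?_⟩
    rw [mul_div_assoc', div_le_iff₀ (by positivity)]
    nlinarith
  obtain ⟨δ, hδ, hδφ⟩ := hUC ε₀ hε₀
  -- choose N so the tail of the series is < δ/2
  set F : ℕ → Finset ℤ := fun N => Finset.Icc (-(N:ℤ)) N with hF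
  have hFmono : Monotone F := fun a b hab =>
    Finset.Icc_subset_Icc (by exact_mod_cast neg_le_neg (Int.ofNat_le.2 hab)) (by exact_mod_cast hab)
  have hFt : Tendsto F atTop atTop := by
    refine tendsto_atTop_finset_of_monotone hFmono fun m => ⟨m.natAbs, ?_⟩
    simp only [hF, Finset.mem_Icc]
    omega
  obtain ⟨N, hN⟩ : ∃ N : ℕ, ∑' n : {m : ℤ // m ∉ F N}, D / 2 ^ (n:ℤ).natAbs < δ/2 := by
    have := (tendsto_tsum_compl_atTop_zero (f := fun n : ℤ => D / 2 ^ n.natAbs)).comp hFt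
    exact ((tendsto_order.1 this).2 (δ/2) (by positivity)).exists
  -- the truncated distance
  set dN : (ℤ → M) → (ℤ → M) → ℝ :=
    fun x y => ∑ n ∈ F N, dist (x n) (y n) / 2 ^ n.natAbs with hdN
  have dN_nonneg : ∀ x y, 0 ≤ dN x y := fun x y => Finset.sum_nonneg fun n _ => by positivity
  have dN_self : ∀ x, dN x x = 0 := fun x => by simp [hdN]
  have dN_symm : ∀ x y, dN x y = dN y x := fun x y =>
    Finset.sum_congr rfl fun n _ => by rw [dist_comm]
  have dN_tri : ∀ x y z, dN x z ≤ dN x y + dN y z := by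
    intro x y z
    rw [hdN]
    simp only
    rw [← Finset.sum_add_distrib]
    refine Finset.sum_le_sum fun n _ => ?_
    rw [← add_div]
    exact div_le_div_of_nonneg_right (dist_triangle _ _ _) (by positivity)
  -- d1 ≤ dN + δ/2
  have hsplit : ∀ x y : ℤ → M, d1 x y ≤ dN x y + δ/2 := by
    intro x y
    have h1 := Summable.sum_add_tsum_compl (s := F N) (d1_summable hD x y)
    have h2 : ∑' n : ↑((F N : Set ℤ))ᶜ, dist (x (n:ℤ)) (y (n:ℤ)) / 2 ^ (n:ℤ).natAbs
        ≤ ∑' n : {m : ℤ // m ∉ F N}, D / 2 ^ (n:ℤ).natAbs := by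
      refine Summable.tsum_le_tsum (fun n => ?_) ((d1_summable hD x y).subtype _)
        ((g_summable D).subtype _)
      exact div_le_div_of_nonneg_right (hD _ _) (by positivity)
    have h3 : d1 x y = dN x y + ∑' n : ↑((F N : Set ℤ))ᶜ, dist (x (n:ℤ)) (y (n:ℤ)) / 2 ^ (n:ℤ).natAbs := by
      unfold d1
      rw [← h1, hdN]
    rw [h3]
    have := hN.le
    linarith
  -- weights
  set W : ℝ := ∑ n ∈ F N, (1:ℝ) / 2 ^ n.natAbs with hW
  have hW0 : 0 ≤ W := Finset.sum_nonneg fun n _ => by positivity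
  have dN_le_dInfty : ∀ x y, dN x y ≤ W * dInfty x y := by
    intro x y
    have hbd : BddAbove (Set.range fun n : ℤ => dist (x n) (y n)) := by
      refine ⟨D, ?_⟩
      rintro _ ⟨n, rfl⟩
      exact hD _ _
    have hle : ∀ n : ℤ, dist (x n) (y n) ≤ dInfty x y := fun n => le_ciSup hbd n
    rw [hW, Finset.sum_mul]
    refine Finset.sum_le_sum fun n _ => ?_
    rw [div_mul_eq_mul_div, one_mul]
    exact div_le_div_of_nonneg_right (hle n) (by positivity)
  have dInfty_nonneg : ∀ x y : ℤ → M, 0 ≤ dInfty x y := by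
    intro x y
    have hbd : BddAbove (Set.range fun n : ℤ => dist (x n) (y n)) := by
      refine ⟨D, ?_⟩
      rintro _ ⟨n, rfl⟩
      exact hD _ _
    exact le_trans dist_nonneg (le_ciSup hbd 0)
  have dN_le_card_d1 : ∀ x y, dN x y ≤ (F N).card * d1 x y := by
    intro x y
    calc dN x y ≤ ∑ _n ∈ F N, d1 x y :=
          Finset.sum_le_sum fun n _ => term_le_d1 hD x y n
      _ = (F N).card * d1 x y := by rw [Finset.sum_const, nsmul_eq_mul]
  -- the Lipschitz constant for the inf-convolution
  obtain ⟨Λ, hΛ0, hΛval⟩ : ∃ L : ℝ, 0 < L ∧ L * (δ/2) = 2*C + δ/2 :=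
    ⟨4*C/δ+1, by positivity, by field_simp; ring⟩
  -- the key inequality
  have hkey : ∀ x ∈ E, ∀ y ∈ E, ∀ i, φ x i - φ y i ≤ ε₀ + Λ * dN x y := by
    intro x hx y hy i
    rcases lt_or_ge (d1 x y) δ with hlt | hge
    · have h1 := hδφ x hx y hy hlt
      have h2 : |φ y i - φ x i| ≤ ‖φ y - φ x‖ := by
        have := coord_abs_le_norm (φ y - φ x) i
        simpa [PiLp.sub_apply] using this
      have h3 := abs_le.1 h2
      have h4 : 0 ≤ Λ * dN x y := mul_nonneg hΛ0.le (dN_nonneg x y)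
      have := h3.1
      linarith
    · have h5 : δ/2 ≤ dN x y := by
        have := hsplit x y
        linarith
      have h6 : 2 * C ≤ Λ * dN x y := by
        have h7 : Λ * (δ/2) ≤ Λ * dN x y := mul_le_mul_of_nonneg_left h5 hΛ0.le
        have h8 := hΛval
        linarith
      have h9 : |φ x i| ≤ C := le_trans (coord_abs_le_norm _ _) (hCb x hx)
      have h10 : |φ y i| ≤ C := le_trans (coord_abs_le_norm _ _) (hCb y hy)
      have := abs_le.1 h9
      have := abs_le.1 h10
      linarith
  -- the approximating map
  set ψ : (ℤ → M) → EuclideanSpace ℝ (Fin k) :=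
    fun x => (WithLp.equiv 2 (Fin k → ℝ)).symm (fun i => ⨅ y : E, (φ y i + Λ * dN x (y:ℤ → M)))
    with hψ
  have hψapp : ∀ x i, ψ x i = ⨅ y : E, (φ y i + Λ * dN x (y:ℤ → M)) := fun x i => rfl
  have hbb : ∀ (x : ℤ → M) (i : Fin k),
      BddBelow (Set.range fun y : E => φ y i + Λ * dN x (y:ℤ → M)) := by
    intro x i
    refine ⟨-C, ?_⟩
    rintro _ ⟨y, rfl⟩
    show -C ≤ φ y i + Λ * dN x (y:ℤ → M)
    have h9 : |φ y i| ≤ C := le_trans (coord_abs_le_norm _ _) (hCb y y.2)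
    have := (abs_le.1 h9).1
    have h4 : 0 ≤ Λ * dN x y := mul_nonneg hΛ0.le (dN_nonneg _ _)
    linarith
  have f1 : ∀ x (hx : x ∈ E), ∀ i, ψ x i ≤ φ x i := by
    intro x hx i
    rw [hψapp]
    have := ciInf_le (hbb x i) ⟨x, hx⟩
    simpa [dN_self] using this
  have f2 : ∀ x ∈ E, ∀ i, φ x i - ε₀ ≤ ψ x i := by
    intro x hx i
    rw [hψapp]
    refine le_ciInf fun y => ?_
    have := hkey x hx y y.2 i
    linarith
  have f3 : ∀ x y : ℤ → M, ∀ i, ψ x i - ψ y i ≤ Λ * dN x y := by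
    intro x y i
    have hstep : ψ x i - Λ * dN x y ≤ ψ y i := by
      rw [hψapp, hψapp]
      refine le_ciInf fun z => ?_
      have h1 : (⨅ w : E, (φ w i + Λ * dN x (w:ℤ → M))) ≤ φ z i + Λ * dN x z :=
        ciInf_le (hbb x i) z
      have h2 : dN x (z:ℤ → M) ≤ dN x y + dN y z := dN_tri _ _ _
      have h3 : Λ * dN x (z:ℤ → M) ≤ Λ * (dN x y + dN y z) :=
        mul_le_mul_of_nonneg_left h2 hΛ0.le
      linarith
    linarith
  have f4 : ∀ x y : ℤ → M, ∀ i, |ψ x i - ψ y i| ≤ Λ * dN x y := by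
    intro x y i
    rw [abs_sub_le_iff]
    exact ⟨f3 x y i, by rw [dN_symm]; exact f3 y x i⟩
  clear_value dN W ψ
  refine ⟨ψ, ?_, ⟨k * (Λ * W), ?_⟩, ?_⟩
  · -- d1-continuity
    intro x hx ε' hε'
    obtain ⟨A, hA0, hA⟩ : ∃ A : ℝ, 0 ≤ A ∧ A = k * (Λ * (F N).card) :=
      ⟨_, mul_nonneg (Nat.cast_nonneg k)
        (mul_nonneg hΛ0.le (Nat.cast_nonneg _)), rfl⟩
    refine ⟨ε' / (A + 1), div_pos hε' (by linarith), fun y hy hxy => ?_⟩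
    have hco : ∀ i, |(ψ y - ψ x) i| ≤ Λ * ((F N).card * d1 x y) := by
      intro i
      have h1 := f4 y x i
      have h2 : dN y x ≤ (F N).card * d1 y x := dN_le_card_d1 y x
      rw [d1_symm y x] at h2
      have h3 : Λ * dN y x ≤ Λ * ((F N).card * d1 x y) :=
        mul_le_mul_of_nonneg_left h2 hΛ0.le
      have h4 : (ψ y - ψ x) i = ψ y i - ψ x i := rfl
      rw [h4]
      linarith
    have h5 : ‖ψ y - ψ x‖ ≤ k * (Λ * ((F N).card * d1 x y)) :=
      norm_le_of_coords _
        (mul_nonneg hΛ0.le (mul_nonneg (by positivity) (d1_nonneg x y))) hco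
    have h6 : k * (Λ * ((F N).card * d1 x y)) = A * d1 x y := by rw [hA]; ring
    have h7 : A * d1 x y ≤ A * (ε' / (A + 1)) :=
      mul_le_mul_of_nonneg_left hxy.le hA0
    have h8 : A * (ε' / (A + 1)) < ε' := by
      rw [mul_div_assoc']
      rw [div_lt_iff₀ (by linarith)]
      nlinarith
    linarith
  · -- dInfty-Lipschitz
    intro x hx y hy
    have hco : ∀ i, |(ψ x - ψ y) i| ≤ Λ * (W * dInfty x y) := by
      intro i
      have h1 := f4 x y i
      have h3 : Λ * dN x y ≤ Λ * (W * dInfty x y) :=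
        mul_le_mul_of_nonneg_left (dN_le_dInfty x y) hΛ0.le
      rw [PiLp.sub_apply]
      linarith
    have h5 : ‖ψ x - ψ y‖ ≤ k * (Λ * (W * dInfty x y)) :=
      norm_le_of_coords _
        (mul_nonneg hΛ0.le (mul_nonneg hW0 (dInfty_nonneg x y))) hco
    calc ‖ψ x - ψ y‖ ≤ k * (Λ * (W * dInfty x y)) := h5
      _ = k * (Λ * W) * dInfty x y := by ring
  · -- closeness
    intro x hx
    have hco : ∀ i, |(ψ x - φ x) i| ≤ ε₀ := by
      intro i
      rw [PiLp.sub_apply, abs_le]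
      constructor
      · have := f2 x hx i; linarith
      · have := f1 x hx i; linarith
    have h5 : ‖ψ x - φ x‖ ≤ k * ε₀ := norm_le_of_coords _ hε₀.le hco
    linarith [hkε₀]
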